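/- For every fixed β ∈ (0,∞), as α → 1 (with α ∈ (0,1)∪(1,∞)) the two-parameter Rényi conditional entropy converges to the Shannon conditional entropy: lim_{α→1} H̃_{α,β}(X|Y) = H(X|Y) := −Σ_{(x,y): P_XY(x,y)>0} P_XY(x,y) · log P_{X|Y}(x|y). -/

import Mathlib

open scoped BigOperators

noncomputable section

variable {𝓧 𝓨 : Type*} [Fintype 𝓧] [Fintype 𝓨]

/-- Marginal distribution of the second component. -/
def pY (P : 𝓧 × 𝓨 → ℝ) (y : 𝓨) : ℝ := ∑ x, P (x, y)

/-- Conditional distribution `P_{X|Y}(x|y)`. -/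
def pCond (P : 𝓧 × 𝓨 → ℝ) (x : 𝓧) (y : 𝓨) : ℝ := P (x, y) / pY P y

/-- Two-parameter Rényi conditional entropy `H̃_{α,β}(X|Y)`. -/
def Htilde (P : 𝓧 × 𝓨 → ℝ) (α β : ℝ) : ℝ :=
  α / (β * (1 - α)) *
    Real.logb 2 (∑ y, if 0 < pY P y then
      pY P y * (∑ x, pCond P x y ^ α) ^ (β / α) else 0)

/-- auxiliary: the inner sum as a function of `α`. -/
def fAux (P : 𝓧 × 𝓨 → ℝ) (β : ℝ) (α : ℝ) : ℝ :=
  ∑ y, if 0 < pY P y then pY P y * (∑ x, pCond P x y ^ α) ^ (β / α) else 0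

lemma Htilde_eq_fAux (P : 𝓧 × 𝓨 → ℝ) (α β : ℝ) :
    Htilde P α β = α / (β * (1 - α)) * Real.logb 2 (fAux P β α) := rfl

/-- for fixed `β ∈ (0,∞)`, as `α → 1` within `(0,1)∪(1,∞)`,
`H̃_{α,β}(X|Y)` converges to the Shannon conditional entropy `H(X|Y)`. -/
theorem Htilde_tendsto_shannon
    [Nonempty 𝓧] [Nonempty 𝓨]
    (P : 𝓧 × 𝓨 → ℝ) (hP : ∀ p, 0 ≤ P p) (hPsum : ∑ p, P p = 1)
    (β : ℝ) (hβ : 0 < β) :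
    Filter.Tendsto (fun α => Htilde P α β)
      (nhdsWithin 1 (Set.Ioo 0 1 ∪ Set.Ioi 1))
      (nhds (-∑ p, if 0 < P p then P p * Real.logb 2 (pCond P p.1 p.2) else 0)) := by
  classical
  have hL2 : (0:ℝ) < Real.log 2 := Real.log_pos (by norm_num)
  have hPYnn : ∀ y, 0 ≤ pY P y := fun y => Finset.sum_nonneg fun x _ => hP _
  have hPlePY : ∀ x y, P (x, y) ≤ pY P y := fun x y =>
    Finset.single_le_sum (f := fun i => P (i, y)) (fun i _ => hP _) (Finset.mem_univ x)
  have hcondnn : ∀ x y, 0 ≤ pCond P x y := fun x y => div_nonneg (hP _) (hPYnn y)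
  have hsumPY : ∑ y, pY P y = 1 := by
    simp only [pY]
    rw [← hPsum, Fintype.sum_prod_type]
    rw [Finset.sum_comm]
  have hcondsum : ∀ y, 0 < pY P y → ∑ x, pCond P x y = 1 := by
    intro y hy
    simp only [pCond]
    rw [← Finset.sum_div]
    exact div_self hy.ne'
  -- f 1 = 1
  have hf1 : fAux P β 1 = 1 := by
    have h : ∀ y : 𝓨,
        (if 0 < pY P y then pY P y * (∑ x, pCond P x y ^ (1:ℝ)) ^ (β / 1) else 0)
          = pY P y := by
      intro y
      split
      · next hy => simp [Real.rpow_one, hcondsum y hy]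
      · next hy => exact (le_antisymm (not_lt.mp hy) (hPYnn y)).symm
    rw [fAux, Finset.sum_congr rfl fun y _ => h y, hsumPY]
  -- positivity of inner sums
  have hgpos : ∀ y, 0 < pY P y → ∀ α : ℝ, 0 < ∑ x, pCond P x y ^ α := by
    intro y hy α
    obtain ⟨x0, hx0⟩ : ∃ x, 0 < P (x, y) := by
      by_contra hcon
      push_neg at hcon
      have : pY P y ≤ 0 := Finset.sum_nonpos fun x _ => hcon x
      linarith
    refine Finset.sum_pos' (fun x _ => Real.rpow_nonneg (hcondnn x y) α)
      ⟨x0, Finset.mem_univ _, Real.rpow_pos_of_pos (div_pos hx0 hy) α⟩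
  have hg1 : ∀ y, 0 < pY P y → ∑ x, pCond P x y ^ (1:ℝ) = 1 := by
    intro y hy; simp [Real.rpow_one, hcondsum y hy]
  -- derivative of the inner sum g_y at 1
  have hgderiv : ∀ y, 0 < pY P y →
      HasDerivAt (fun α : ℝ => ∑ x, pCond P x y ^ α)
        (∑ x, if 0 < pCond P x y then pCond P x y * Real.log (pCond P x y) else 0) 1 := by
    intro y hy
    refine HasDerivAt.fun_sum fun x _ => ?_
    by_cases hx : 0 < pCond P x y
    · rw [if_pos hx]
      have h := (hasDerivAt_const (1:ℝ) (pCond P x y)).rpow (hasDerivAt_id 1) hx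
      refine h.congr_deriv (Eq.symm ?_)
      simp only [id_eq, Real.rpow_one]
      ring
    · have hx0 : pCond P x y = 0 := le_antisymm (not_lt.mp hx) (hcondnn x y)
      rw [if_neg hx, hx0]
      have heq : (fun α : ℝ => (0:ℝ) ^ α) =ᶠ[nhds (1:ℝ)] fun _ => (0:ℝ) := by
        filter_upwards [eventually_ne_nhds (one_ne_zero (α := ℝ))] with a ha
        exact Real.zero_rpow ha
      exact (hasDerivAt_const (1:ℝ) (0:ℝ)).congr_of_eventuallyEq heq
  set D : ℝ := β * ∑ p : 𝓧 × 𝓨,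
      (if 0 < P p then P p * Real.log (pCond P p.1 p.2) else 0) with hD
  -- derivative of fAux at 1
  have hfderiv : HasDerivAt (fAux P β) D 1 := by
    have hterm : ∀ y : 𝓨,
        HasDerivAt (fun α : ℝ => if 0 < pY P y then
            pY P y * (∑ x, pCond P x y ^ α) ^ (β / α) else 0)
          (if 0 < pY P y then pY P y *
            (β * ∑ x, if 0 < pCond P x y then pCond P x y * Real.log (pCond P x y) else 0)
            else 0) 1 := by
      intro y
      by_cases hy : 0 < pY P y
      · simp only [if_pos hy]
        have hβα : HasDerivAt (fun α : ℝ => β / α) (-β) 1 := by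
          have h1 := (hasDerivAt_inv (one_ne_zero : (1:ℝ) ≠ 0)).const_mul β
          simpa [div_eq_mul_inv] using h1
        have hr := ((hgderiv y hy).rpow hβα (by rw [hg1 y hy]; norm_num))
        have := hr.const_mul (pY P y)
        refine this.congr_deriv (Eq.symm ?_)
        rw [hg1 y hy]
        simp only [Real.log_one, Real.one_rpow, mul_zero, add_zero, mul_one, div_one]
        ring
      · simp only [if_neg hy]
        exact hasDerivAt_const _ _
    have hsum := HasDerivAt.fun_sum (fun y (_ : y ∈ Finset.univ) => hterm y)
    refine hsum.congr_deriv (Eq.symm ?_)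
    rw [hD, Fintype.sum_prod_type, Finset.sum_comm, Finset.mul_sum]
    refine Finset.sum_congr rfl fun y _ => ?_
    by_cases hy : 0 < pY P y
    · rw [if_pos hy]
      have hterm' : ∀ x, β * (if 0 < P (x, y) then P (x, y) * Real.log (pCond P x y) else 0)
          = pY P y * (β * (if 0 < pCond P x y then pCond P x y * Real.log (pCond P x y) else 0)) := by
        intro x
        have hiff : 0 < pCond P x y ↔ 0 < P (x, y) := by
          constructor
          · intro hc
            by_contra hP0
            push_neg at hP0
            have hz : P (x, y) = 0 := le_antisymm hP0 (hP _)
            simp [pCond, hz] at hc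
          · intro hp; exact div_pos hp hy
        by_cases hx : 0 < P (x, y)
        · rw [if_pos hx, if_pos (hiff.mpr hx)]
          have hpc : pCond P x y = P (x, y) / pY P y := rfl
          rw [hpc]
          field_simp
        · rw [if_neg hx, if_neg (fun hc => hx (hiff.mp hc))]
          ring
      rw [Finset.mul_sum, Finset.mul_sum, Finset.mul_sum]
      exact Finset.sum_congr rfl fun x _ => hterm' x
    · rw [if_neg hy]
      have hzero : ∀ x, P (x, y) = 0 := fun x =>
        le_antisymm ((hPlePY x y).trans (not_lt.mp hy)) (hP _)
      simp [hzero]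
  -- derivative of log ∘ fAux at 1
  have hLog : HasDerivAt (fun α => Real.log (fAux P β α)) D 1 := by
    have h := hfderiv.log (by rw [hf1]; exact one_ne_zero)
    simpa [hf1] using h
  have hslope : Filter.Tendsto (fun α => Real.log (fAux P β α) / (α - 1))
      (nhdsWithin 1 {(1:ℝ)}ᶜ) (nhds D) := by
    have h := hasDerivAt_iff_tendsto_slope.mp hLog
    refine h.congr fun α => ?_
    rw [slope_def_field, hf1, Real.log_one, sub_zero]
  have hsub : (Set.Ioo (0:ℝ) 1 ∪ Set.Ioi 1) ⊆ {(1:ℝ)}ᶜ := by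
    intro a ha
    rcases ha with h | h
    · exact Set.mem_compl_singleton_iff.mpr (ne_of_lt h.2)
    · exact Set.mem_compl_singleton_iff.mpr (ne_of_gt h)
  have hmono : nhdsWithin (1:ℝ) (Set.Ioo 0 1 ∪ Set.Ioi 1) ≤ nhdsWithin 1 {(1:ℝ)}ᶜ :=
    nhdsWithin_mono _ hsub
  have hcoef : Filter.Tendsto (fun α : ℝ => -(α / (β * Real.log 2)))
      (nhdsWithin 1 (Set.Ioo 0 1 ∪ Set.Ioi 1)) (nhds (-(1 / (β * Real.log 2)))) := by
    have hc : Continuous (fun α : ℝ => -(α / (β * Real.log 2))) := by continuity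
    have := hc.tendsto 1
    simpa using this.mono_left nhdsWithin_le_nhds
  have hmain : Filter.Tendsto
      (fun α => -(α / (β * Real.log 2)) * (Real.log (fAux P β α) / (α - 1)))
      (nhdsWithin 1 (Set.Ioo 0 1 ∪ Set.Ioi 1))
      (nhds (-(1 / (β * Real.log 2)) * D)) :=
    hcoef.mul (hslope.mono_left hmono)
  have hval : -(1 / (β * Real.log 2)) * D
      = -∑ p, if 0 < P p then P p * Real.logb 2 (pCond P p.1 p.2) else 0 := by
    have h : ∀ p : 𝓧 × 𝓨,
        (if 0 < P p then P p * Real.logb 2 (pCond P p.1 p.2) else 0)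
          = (if 0 < P p then P p * Real.log (pCond P p.1 p.2) else 0) / Real.log 2 := by
      intro p
      split
      · rw [Real.logb]; ring
      · simp
    rw [Finset.sum_congr rfl fun p _ => h p, ← Finset.sum_div, hD]
    field_simp
  rw [← hval]
  refine hmain.congr' ?_
  filter_upwards [self_mem_nhdsWithin] with α hα
  have hα1 : α ≠ 1 := Set.mem_compl_singleton_iff.mp (hsub hα)
  rw [Htilde_eq_fAux, Real.logb]
  field_simp
  ring
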